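/- Let G be a group with a finite-index characteristic subgroup A isomorphic to ℤ^r, and suppose there is a group homomorphism sgn : G → {1,−1} (the units of ℤ) such that g⁻¹ x g = x^{sgn g} for all g ∈ G and x ∈ A. Let ℤ^r ⋊ {1,−1} denote the semidirect product in which −1 acts on ℤ^r by inversion (negation). Then there exists a group homomorphism σ : G → ℤ^r ⋊ {1,−1} such that the restriction of σ to A is injective and, for every g ∈ G, the {1,−1}-coordinate of σ(g) equals sgn(g). -/

import Mathlib

section Aux

variable {G : Type*} [Group G] {r : ℕ}

theorem coc_mem (A : Subgroup G) (g : G) (q : G ⧸ A) :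
    ((g • q).out)⁻¹ * (g * q.out) ∈ A := by
  rw [← QuotientGroup.eq, QuotientGroup.out_eq', ← smul_eq_mul,
    ← MulAction.Quotient.smul_mk, QuotientGroup.out_eq']

noncomputable def cocA (A : Subgroup G) (g : G) (q : G ⧸ A) : A :=
  ⟨((g • q).out)⁻¹ * (g * q.out), coc_mem A g q⟩

theorem smul_out_eq (A : Subgroup G) (g : G) (q : G ⧸ A) :
    (g • q).out * (cocA A g q : G) = g * q.out := by
  simp [cocA, mul_inv_cancel_left]

theorem cocA_mul (A : Subgroup G) (g h : G) (q : G ⧸ A) :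
    cocA A (g * h) q = cocA A g (h • q) * cocA A h q := by
  apply Subtype.ext
  show (((g * h) • q).out)⁻¹ * (g * h * q.out)
      = ((((g • (h • q)).out)⁻¹ * (g * (h • q).out))) * (((h • q).out)⁻¹ * (h * q.out))
  rw [mul_smul]
  group

theorem sgn_smul_out (A : Subgroup G) (sgn : G →* ℤˣ) (hs : ∀ x : A, sgn (x : G) = 1)
    (g : G) (q : G ⧸ A) : sgn ((g • q).out) = sgn g * sgn q.out := by
  have h := congrArg sgn (smul_out_eq A g q)
  rwa [map_mul, map_mul, hs, mul_one] at h

noncomputable def Fc (A : Subgroup G) [Fintype (G ⧸ A)]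
    (e : A ≃* Multiplicative (Fin r → ℤ)) (sgn : G →* ℤˣ) (g : G) : Fin r → ℤ :=
  ∑ q : G ⧸ A, (sgn q.out : ℤ) • (e (cocA A g q)).toAdd

theorem Fc_mul (A : Subgroup G) [Fintype (G ⧸ A)]
    (e : A ≃* Multiplicative (Fin r → ℤ)) (sgn : G →* ℤˣ)
    (hs : ∀ x : A, sgn (x : G) = 1) (g h : G) :
    Fc A e sgn (g * h) = (sgn h : ℤ) • Fc A e sgn g + Fc A e sgn h := by
  have hh : (sgn h : ℤ) * (sgn h : ℤ) = 1 := by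
    rw [← Units.val_mul, Int.units_mul_self, Units.val_one]
  unfold Fc
  have key : ∀ q : G ⧸ A, (sgn q.out : ℤ) • (e (cocA A (g * h) q)).toAdd
      = (sgn q.out : ℤ) • (e (cocA A g (h • q))).toAdd
        + (sgn q.out : ℤ) • (e (cocA A h q)).toAdd := by
    intro q
    rw [cocA_mul A g h q, map_mul, toAdd_mul, smul_add]
  rw [Finset.sum_congr rfl fun q _ => key q, Finset.sum_add_distrib]
  congr 1
  rw [Finset.smul_sum]
  apply Fintype.sum_bijective (fun q : G ⧸ A => h • q) (MulAction.bijective h)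
  intro q
  rw [sgn_smul_out A sgn hs h q, smul_smul, Units.val_mul, ← mul_assoc, hh, one_mul]

theorem Fc_on_A (A : Subgroup G) [Fintype (G ⧸ A)] (hnorm : A.Normal)
    (e : A ≃* Multiplicative (Fin r → ℤ)) (sgn : G →* ℤˣ)
    (hsgn : ∀ g x : G, x ∈ A → g⁻¹ * x * g = x ^ ((sgn g : ℤ))) (x : A) :
    Fc A e sgn (x : G) = (Fintype.card (G ⧸ A) : ℤ) • (e x).toAdd := by
  have hq : ∀ q : G ⧸ A, (x : G) • q = q := by
    intro q
    conv_lhs => rw [← QuotientGroup.out_eq' q]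
    rw [MulAction.Quotient.smul_mk, smul_eq_mul]
    conv_rhs => rw [← QuotientGroup.out_eq' q]
    rw [QuotientGroup.eq]
    have := hnorm.conj_mem _ (A.inv_mem x.2) q.out⁻¹
    simpa [mul_inv_rev, mul_assoc] using this
  have hcoc : ∀ q : G ⧸ A, cocA A (x : G) q = x ^ ((sgn q.out : ℤ)) := by
    intro q
    apply Subtype.ext
    show ((x : G) • q).out⁻¹ * ((x : G) * q.out) = ((x ^ ((sgn q.out : ℤ)) : A) : G)
    rw [hq q, ← mul_assoc]
    exact (hsgn q.out x x.2).trans (SubgroupClass.coe_zpow x _).symm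
  unfold Fc
  calc ∑ q : G ⧸ A, (sgn q.out : ℤ) • (e (cocA A (x : G) q)).toAdd
      = ∑ _q : G ⧸ A, (e x).toAdd := by
        apply Finset.sum_congr rfl
        intro q _
        rw [hcoc q, map_zpow, toAdd_zpow, smul_smul, ← Units.val_mul,
          Int.units_mul_self, Units.val_one, one_smul]
    _ = (Fintype.card (G ⧸ A) : ℤ) • (e x).toAdd := by
        rw [Finset.sum_const, Finset.card_univ, natCast_zsmul]

end Aux

/-- The action of `{1, -1} = ℤˣ` on `ℤ^r` (written multiplicatively) in which `-1`
acts by inversion. -/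
def signAut (r : ℕ) : ℤˣ →* MulAut (Multiplicative (Fin r → ℤ)) where
  toFun u :=
    { toFun := fun x => x ^ ((u : ℤ))
      invFun := fun x => x ^ ((u : ℤ))
      left_inv := fun x => by
        have h : ((u : ℤ)) * ((u : ℤ)) = 1 := by
          rw [← Units.val_mul, Int.units_mul_self, Units.val_one]
        show (x ^ ((u : ℤ))) ^ ((u : ℤ)) = x
        rw [← zpow_mul, h, zpow_one]
      right_inv := fun x => by
        have h : ((u : ℤ)) * ((u : ℤ)) = 1 := by
          rw [← Units.val_mul, Int.units_mul_self, Units.val_one]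
        show (x ^ ((u : ℤ))) ^ ((u : ℤ)) = x
        rw [← zpow_mul, h, zpow_one]
      map_mul' := fun x y => mul_zpow x y ((u : ℤ)) }
  map_one' := by
    ext1 x
    show x ^ (((1 : ℤˣ) : ℤ)) = x
    simp
  map_mul' u v := by
    ext1 x
    simp only [MulAut.mul_apply]
    show x ^ (((u * v : ℤˣ) : ℤ)) = (x ^ ((v : ℤ))) ^ ((u : ℤ))
    rw [← zpow_mul, mul_comm ((v : ℤ)) ((u : ℤ)), ← Units.val_mul]

/-- if `A ≅ ℤ^r` is a finite-index characteristic subgroup of `G` on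
which conjugation acts via a sign homomorphism `sgn`, then there is a homomorphism
`σ : G → ℤ^r ⋊ {1,-1}` (with `-1` acting by inversion) that is injective on `A` and
whose `{1,-1}`-coordinate is `sgn`. -/
theorem exists_hom_to_semidirect_of_sgn {G : Type*} [Group G]
    (r : ℕ) (A : Subgroup G) [A.FiniteIndex]
    (hchar : ∀ φ : MulAut G, Subgroup.map φ.toMonoidHom A = A)
    (e : A ≃* Multiplicative (Fin r → ℤ))
    (sgn : G →* ℤˣ) (hsgn : ∀ g x : G, x ∈ A → g⁻¹ * x * g = x ^ ((sgn g : ℤ))) :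
    ∃ σ : G →* SemidirectProduct (Multiplicative (Fin r → ℤ)) ℤˣ (signAut r),
      Function.Injective (σ.comp A.subtype) ∧
      ∀ g : G, (σ g).right = sgn g := by
  classical
  haveI : Fintype (G ⧸ A) := Fintype.ofFinite _
  -- A is normal
  have hnorm : A.Normal := by
    constructor
    intro n hn g
    have h := hchar (MulAut.conj g)
    rw [← h]
    exact ⟨n, hn, rfl⟩
  -- sgn is trivial on A
  have sgnA : ∀ x : A, sgn (x : G) = 1 := by
    intro x
    rcases Int.units_eq_one_or (sgn (x : G)) with h | h
    · exact h
    · exfalso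
      have h1 := hsgn (x : G) (x : G) x.2
      rw [h] at h1
      have h2 : (x : G) = (x : G)⁻¹ := by
        simpa [inv_mul_cancel_left, zpow_neg, zpow_one] using h1
      have h3 : (x * x : A) = 1 := by
        apply Subtype.ext
        push_cast
        nth_rewrite 1 [h2]
        rw [inv_mul_cancel]
      have h4 : x = 1 := by
        have h5 := congrArg (fun y : A => (e y).toAdd) h3
        simp only [map_mul, map_one, toAdd_mul, toAdd_one] at h5
        have h6 : (e x).toAdd = 0 := by
          funext i
          have := congrFun h5 i
          simp only [Pi.add_apply, Pi.zero_apply] at this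
          show (e x).toAdd i = 0
          omega
        apply e.injective
        rw [map_one]
        rw [← ofAdd_toAdd (e x), h6, ofAdd_zero]
      rw [h4] at h
      simp at h
  -- the homomorphism
  have hmul : ∀ g h : G,
      (⟨Multiplicative.ofAdd ((sgn (g * h) : ℤ) • Fc A e sgn (g * h)), sgn (g * h)⟩ :
        SemidirectProduct (Multiplicative (Fin r → ℤ)) ℤˣ (signAut r))
      = ⟨Multiplicative.ofAdd ((sgn g : ℤ) • Fc A e sgn g), sgn g⟩
        * ⟨Multiplicative.ofAdd ((sgn h : ℤ) • Fc A e sgn h), sgn h⟩ := by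
    intro g h
    have hh : (sgn h : ℤ) * (sgn h : ℤ) = 1 := by
      rw [← Units.val_mul, Int.units_mul_self, Units.val_one]
    rw [SemidirectProduct.mul_def]
    apply SemidirectProduct.ext
    · show Multiplicative.ofAdd ((sgn (g * h) : ℤ) • Fc A e sgn (g * h))
        = Multiplicative.ofAdd ((sgn g : ℤ) • Fc A e sgn g)
          * (Multiplicative.ofAdd ((sgn h : ℤ) • Fc A e sgn h)) ^ ((sgn g : ℤ))
      rw [← ofAdd_zsmul, ← ofAdd_add]
      congr 1
      rw [Fc_mul A e sgn sgnA g h, map_mul, Units.val_mul, smul_add, smul_smul, smul_smul,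
        mul_assoc, hh, mul_one]
    · exact map_mul sgn g h
  refine ⟨MonoidHom.mk' (fun g =>
      ⟨Multiplicative.ofAdd ((sgn g : ℤ) • Fc A e sgn g), sgn g⟩) hmul, ?_, ?_⟩
  · intro x y hxy
    simp only [MonoidHom.comp_apply, MonoidHom.mk'_apply, Subgroup.coe_subtype] at hxy
    have hleft := congrArg SemidirectProduct.left hxy
    simp only at hleft
    rw [sgnA x, sgnA y, Units.val_one, one_smul, one_smul] at hleft
    have hF : Fc A e sgn (x : G) = Fc A e sgn (y : G) :=
      Multiplicative.ofAdd.injective hleft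
    rw [Fc_on_A A hnorm e sgn hsgn x, Fc_on_A A hnorm e sgn hsgn y] at hF
    have hcard : (Fintype.card (G ⧸ A) : ℤ) ≠ 0 := by
      exact_mod_cast Fintype.card_ne_zero
    have hE : (e x).toAdd = (e y).toAdd := by
      funext i
      have := congrFun hF i
      simp only [Pi.smul_apply, smul_eq_mul] at this
      exact mul_left_cancel₀ hcard this
    apply e.injective
    rw [← ofAdd_toAdd (e x), ← ofAdd_toAdd (e y), hE]
  · intro g
    rfl
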